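/- Let p > 1, q > 1 with 1/p + 1/q = 1. For 0 < ε < 1 consider the probability vectors a = (1/2, 1/2) and b = ((1 + ε)/2, (1 − ε)/2). Then the quotient (1 − [(1/2)(1 + ε)^{1/q} + (1/2)(1 − ε)^{1/q}]) / ε^2, which equals (1 − Σ_k a_k^{1/p} b_k^{1/q}) / (Σ_k |a_k − b_k|)^2, tends to 1/(2pq) as ε → 0⁺. -/

import Mathlib

open Filter Topology Set

theorem holder_stability_quotient_limit
    (p q : ℝ) (hp : 1 < p) (hq : 1 < q) (hpq : 1/p + 1/q = 1) :
    Filter.Tendsto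
      (fun ε : ℝ =>
        (1 - ((1/2) * (1 + ε) ^ (1/q) + (1/2) * (1 - ε) ^ (1/q))) / ε^2)
      (nhdsWithin 0 (Set.Ioo 0 1))
      (nhds (1/(2*p*q))) := by
  set s : ℝ := 1/q with hs
  have hq0 : (0:ℝ) < q := lt_trans one_pos hq
  have hp0 : (0:ℝ) < p := lt_trans one_pos hp
  have hs0 : 0 < s := by positivity
  have hs1 : s < 1 := by
    rw [hs, div_lt_one hq0]; exact hq
  have hip : 1/p = 1 - s := by linarith
  rw [nhdsWithin_Ioo_eq_nhdsGT (by norm_num : (0:ℝ) < 1)]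
  set f : ℝ → ℝ := fun ε => 1 - ((1/2) * (1 + ε) ^ s + (1/2) * (1 - ε) ^ s) with hf
  set f' : ℝ → ℝ := fun ε => -(1/2) * s * (1 + ε) ^ (s-1) + (1/2) * s * (1 - ε) ^ (s-1) with hf'
  set f'' : ℝ → ℝ := fun ε =>
    -(1/2) * s * (s-1) * (1 + ε) ^ (s-2) - (1/2) * s * (s-1) * (1 - ε) ^ (s-2) with hf''
  have hbase : ∀ x ∈ Ioo (0:ℝ) 1, (0:ℝ) < 1 + x ∧ (0:ℝ) < 1 - x := by
    rintro x ⟨h1, h2⟩; constructor <;> linarith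
  -- derivatives
  have hd1 : ∀ x ∈ Ioo (0:ℝ) 1, ∀ r : ℝ,
      HasDerivAt (fun ε : ℝ => (1 + ε) ^ r) (r * (1 + x) ^ (r-1)) x := by
    intro x hx r
    have h := (Real.hasDerivAt_rpow_const (p := r) (Or.inl (ne_of_gt (hbase x hx).1)))
    have hlin : HasDerivAt (fun ε : ℝ => 1 + ε) 1 x := by
      simpa using (hasDerivAt_id x).const_add (1:ℝ)
    exact (h.comp x hlin).congr_deriv (by ring)
  have hd2 : ∀ x ∈ Ioo (0:ℝ) 1, ∀ r : ℝ,
      HasDerivAt (fun ε : ℝ => (1 - ε) ^ r) (-(r * (1 - x) ^ (r-1))) x := by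
    intro x hx r
    have h := (Real.hasDerivAt_rpow_const (p := r) (Or.inl (ne_of_gt (hbase x hx).2)))
    have hlin : HasDerivAt (fun ε : ℝ => 1 - ε) (-1) x := by
      simpa using (hasDerivAt_id x).const_sub (1:ℝ)
    have := h.comp x hlin
    exact this.congr_deriv (by ring)
  have hff' : ∀ x ∈ Ioo (0:ℝ) 1, HasDerivAt f (f' x) x := by
    intro x hx
    have h1 := ((hd1 x hx s).const_mul (1/2:ℝ)).add ((hd2 x hx s).const_mul (1/2:ℝ))
    have := h1.const_sub (1:ℝ)
    refine this.congr_deriv ?_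
    simp [hf']; ring
  have hf'f'' : ∀ x ∈ Ioo (0:ℝ) 1, HasDerivAt f' (f'' x) x := by
    intro x hx
    have h1 := ((hd1 x hx (s-1)).const_mul (-(1/2) * s)).add
      ((hd2 x hx (s-1)).const_mul ((1/2) * s))
    refine h1.congr_deriv ?_
    simp [hf'']; ring_nf
  have hgg' : ∀ x ∈ Ioo (0:ℝ) 1, HasDerivAt (fun ε : ℝ => ε^2) (2*x) x := by
    intro x _; simpa using (hasDerivAt_pow 2 x)
  have hg'g'' : ∀ x ∈ Ioo (0:ℝ) 1, HasDerivAt (fun ε : ℝ => 2*ε) (2:ℝ) x := by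
    intro x _; simpa using (hasDerivAt_id x).const_mul (2:ℝ)
  -- limits at 0
  have hcont : ∀ r : ℝ, Tendsto (fun ε : ℝ => (1 + ε) ^ r) (𝓝[>] 0) (𝓝 1) ∧
      Tendsto (fun ε : ℝ => (1 - ε) ^ r) (𝓝[>] 0) (𝓝 1) := by
    intro r
    have h1 : ContinuousAt (fun ε : ℝ => (1 + ε) ^ r) 0 := by
      apply ContinuousAt.rpow_const (by fun_prop)
      left; norm_num
    have h2 : ContinuousAt (fun ε : ℝ => (1 - ε) ^ r) 0 := by
      apply ContinuousAt.rpow_const (by fun_prop)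
      left; norm_num
    constructor
    · simpa using tendsto_nhdsWithin_of_tendsto_nhds h1.tendsto
    · simpa using tendsto_nhdsWithin_of_tendsto_nhds h2.tendsto
  have hfa : Tendsto f (𝓝[>] (0:ℝ)) (𝓝 0) := by
    have := (((hcont s).1.const_mul (1/2:ℝ)).add ((hcont s).2.const_mul (1/2:ℝ))).const_sub 1
    have h0 : (1:ℝ) - ((1/2)*1 + (1/2)*1) = 0 := by norm_num
    rw [h0] at this
    simpa [hf] using this
  have hf'a : Tendsto f' (𝓝[>] (0:ℝ)) (𝓝 0) := by
    have := (((hcont (s-1)).1.const_mul (-(1/2)*s)).add ((hcont (s-1)).2.const_mul ((1/2)*s)))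
    have h2 : (-(1/2)*s) * 1 + ((1/2)*s) * 1 = 0 := by ring
    rw [h2] at this
    simpa [hf'] using this
  have hga : Tendsto (fun ε : ℝ => ε^2) (𝓝[>] (0:ℝ)) (𝓝 0) := by
    have : ContinuousAt (fun ε : ℝ => ε^2) 0 := by fun_prop
    simpa using tendsto_nhdsWithin_of_tendsto_nhds this.tendsto
  have hg'a : Tendsto (fun ε : ℝ => 2*ε) (𝓝[>] (0:ℝ)) (𝓝 0) := by
    have : ContinuousAt (fun ε : ℝ => 2*ε) 0 := by fun_prop
    simpa using tendsto_nhdsWithin_of_tendsto_nhds this.tendsto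
  -- limit of f''/2
  have hL : Tendsto (fun x => f'' x / (2:ℝ)) (𝓝[>] (0:ℝ)) (𝓝 (1/(2*p*q))) := by
    have := (((hcont (s-2)).1.const_mul (-(1/2)*s*(s-1))).sub
      ((hcont (s-2)).2.const_mul ((1/2)*s*(s-1)))).div_const 2
    have heq : ((-(1/2)*s*(s-1)) * 1 - ((1/2)*s*(s-1)) * 1) / 2 = 1/(2*p*q) := by
      have h1s : (1:ℝ) - s = 1/p := by linarith
      have hr : ((-(1/2)*s*(s-1)) * 1 - ((1/2)*s*(s-1)) * 1) / 2 = s * (1-s) / 2 := by ring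
      rw [hr, h1s, hs]
      field_simp
    rw [heq] at this
    simpa [hf''] using this
  have h2 : Tendsto (fun x => f' x / (2*x)) (𝓝[>] (0:ℝ)) (𝓝 (1/(2*p*q))) := by
    refine HasDerivAt.lhopital_zero_right_on_Ioo (by norm_num : (0:ℝ) < 1)
      hf'f'' hg'g'' (fun x _ => two_ne_zero) hf'a hg'a hL
  have h1 : Tendsto (fun x => f x / x^2) (𝓝[>] (0:ℝ)) (𝓝 (1/(2*p*q))) := by
    refine HasDerivAt.lhopital_zero_right_on_Ioo (by norm_num : (0:ℝ) < 1)
      hff' hgg' (fun x hx => ne_of_gt (by have := hx.1; linarith)) hfa hga h2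
  exact h1
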